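/- arXiv:2403.08341 — 4 statements merged into one kernel-verified Lean document; each statement's English description precedes it below -/
import Mathlib

section
/- Let ρ : (a,b) → ℝ be C¹ and nowhere zero, θ_k, θ_ℓ : (a,b) → ℝ be C², λ_k, λ_ℓ ∈ ℝ with λ_k ≠ λ_ℓ. Assume ρθ_k'' + 2ρ'θ_k' = 0, ρθ_ℓ'' + 2ρ'θ_ℓ' = 0, and (θ_k')² − (θ_ℓ')² = λ_k − λ_ℓ on (a,b). Then ρ is constant on (a,b). -/
open Set

theorem stmt1 (a b : ℝ) (hab : a < b) (ρ θk θl : ℝ → ℝ) (lk ll : ℝ) (hne : lk ≠ ll)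
    (hρ : ContDiffOn ℝ 1 ρ (Ioo a b))
    (hρ0 : ∀ x ∈ Ioo a b, ρ x ≠ 0)
    (hθk : ContDiffOn ℝ 2 θk (Ioo a b))
    (hθl : ContDiffOn ℝ 2 θl (Ioo a b))
    (hodek : ∀ x ∈ Ioo a b,
      ρ x * deriv (deriv θk) x + 2 * deriv ρ x * deriv θk x = 0)
    (hodel : ∀ x ∈ Ioo a b,
      ρ x * deriv (deriv θl) x + 2 * deriv ρ x * deriv θl x = 0)
    (heik : ∀ x ∈ Ioo a b, (deriv θk x) ^ 2 - (deriv θl x) ^ 2 = lk - ll) :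
    ∃ c : ℝ, ∀ x ∈ Ioo a b, ρ x = c := by
  have hO : IsOpen (Ioo a b) := isOpen_Ioo
  -- deriv θk and deriv θl are differentiable on Ioo a b
  have hdk : ContDiffOn ℝ 1 (deriv θk) (Ioo a b) := by
    have := hθk.deriv_of_isOpen (m := 1) hO (by norm_num)
    exact this
  have hdl : ContDiffOn ℝ 1 (deriv θl) (Ioo a b) := by
    have := hθl.deriv_of_isOpen (m := 1) hO (by norm_num)
    exact this
  -- the derivative of ρ vanishes on Ioo a b
  have hρ' : ∀ x ∈ Ioo a b, deriv ρ x = 0 := by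
    intro x hx
    have hmem : Ioo a b ∈ nhds x := hO.mem_nhds hx
    have hk' : HasDerivAt (deriv θk) (deriv (deriv θk) x) x :=
      ((hdk.differentiableOn one_ne_zero).differentiableAt hmem).hasDerivAt
    have hl' : HasDerivAt (deriv θl) (deriv (deriv θl) x) x :=
      ((hdl.differentiableOn one_ne_zero).differentiableAt hmem).hasDerivAt
    -- derivative of (θk')² - (θl')²
    have hF : HasDerivAt (fun y => (deriv θk y) ^ 2 - (deriv θl y) ^ 2)
        ((2 : ℕ) * (deriv θk x) ^ 1 * deriv (deriv θk) x
          - (2 : ℕ) * (deriv θl x) ^ 1 * deriv (deriv θl) x) x :=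
      (hk'.pow 2).sub (hl'.pow 2)
    have heq : (fun y => (deriv θk y) ^ 2 - (deriv θl y) ^ 2)
        =ᶠ[nhds x] fun _ => lk - ll := by
      filter_upwards [hmem] with y hy using heik y hy
    have hF0 : HasDerivAt (fun y => (deriv θk y) ^ 2 - (deriv θl y) ^ 2) 0 x :=
      (hasDerivAt_const x (lk - ll)).congr_of_eventuallyEq heq
    have h4 : (2 : ℕ) * (deriv θk x) ^ 1 * deriv (deriv θk) x
        - (2 : ℕ) * (deriv θl x) ^ 1 * deriv (deriv θl) x = 0 := hF.unique hF0
    push_cast at h4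
    have h1 := hodek x hx
    have h2 := hodel x hx
    have h3 := heik x hx
    have h5 : 2 * deriv ρ x * (lk - ll) = 0 := by
      linear_combination (deriv θk x) * h1 - (deriv θl x) * h2
        - (ρ x / 2) * h4 - 2 * deriv ρ x * h3
    have hll : lk - ll ≠ 0 := sub_ne_zero.mpr hne
    rcases mul_eq_zero.mp h5 with h | h
    · rcases mul_eq_zero.mp h with h | h
      · norm_num at h
      · exact h
    · exact absurd h hll
  -- ρ is constant on the convex set Ioo a b
  have hx0 : (a + b) / 2 ∈ Ioo a b := ⟨by linarith, by linarith⟩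
  refine ⟨ρ ((a + b) / 2), fun x hx => ?_⟩
  apply (convex_Ioo a b).is_const_of_fderivWithin_eq_zero
    (hρ.differentiableOn one_ne_zero) ?_ hx hx0
  intro z hz
  have hzmem : Ioo a b ∈ nhds z := hO.mem_nhds hz
  rw [fderivWithin_of_isOpen hO hz]
  ext
  simp [← toSpanSingleton_deriv, hρ' z hz]
end

section
/- Let ρ : (a,b) → ℝ be C¹ and nowhere zero, θ_k, θ_ℓ : (a,b) → ℝ be C², and λ ∈ ℝ. Assume ρθ_k'' + 2ρ'θ_k' = 0, ρθ_ℓ'' + 2ρ'θ_ℓ' = 0, and (θ_k')² = (θ_ℓ')² on (a,b). Then either θ_k − θ_ℓ is constant on (a,b) or θ_k + θ_ℓ is constant on (a,b). -/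
open Set

lemma const_of_derivzero {f : ℝ → ℝ} {a b : ℝ}
    (h : ∀ x ∈ Ioo a b, HasDerivAt f 0 x) :
    ∀ x ∈ Ioo a b, ∀ y ∈ Ioo a b, f x = f y := by
  intro x hx y hy
  apply (convex_Ioo a b).is_const_of_fderivWithin_eq_zero
    (fun z hz => ((h z hz).differentiableAt).differentiableWithinAt) ?_ hx hy
  intro z hz
  rw [fderivWithin_eq_fderiv (isOpen_Ioo.uniqueDiffOn z hz) (h z hz).differentiableAt,
    (h z hz).hasFDerivAt.fderiv]
  ext
  simp

lemma key_lemma {a b : ℝ} {ρ θ : ℝ → ℝ} (hρ : ContDiffOn ℝ 1 ρ (Ioo a b))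
    (hθ : ContDiffOn ℝ 2 θ (Ioo a b))
    (hode : ∀ x ∈ Ioo a b, ρ x * deriv (deriv θ) x + 2 * deriv ρ x * deriv θ x = 0) :
    ∀ x ∈ Ioo a b, HasDerivAt (fun y => ρ y ^ 2 * deriv θ y) 0 x := by
  intro x hx
  have hρd : HasDerivAt ρ (deriv ρ x) x :=
    ((hρ.contDiffAt (isOpen_Ioo.mem_nhds hx)).differentiableAt (by norm_num)).hasDerivAt
  have hθd : HasDerivAt (deriv θ) (deriv (deriv θ) x) x := by
    have h1 : ContDiffOn ℝ 1 (deriv θ) (Ioo a b) :=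
      hθ.deriv_of_isOpen isOpen_Ioo (by norm_num)
    exact ((h1.contDiffAt (isOpen_Ioo.mem_nhds hx)).differentiableAt (by norm_num)).hasDerivAt
  have H : HasDerivAt (fun y => ρ y ^ 2 * deriv θ y) _ x := (hρd.pow 2).mul hθd
  convert H using 1
  have he := hode x hx
  simp only [Nat.cast_ofNat, pow_one, Pi.pow_apply]
  linear_combination -(ρ x) * he

theorem stmt2 (a b : ℝ) (hab : a < b) (ρ θk θl : ℝ → ℝ)
    (hρ : ContDiffOn ℝ 1 ρ (Ioo a b))
    (hρ0 : ∀ x ∈ Ioo a b, ρ x ≠ 0)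
    (hθk : ContDiffOn ℝ 2 θk (Ioo a b))
    (hθl : ContDiffOn ℝ 2 θl (Ioo a b))
    (hodek : ∀ x ∈ Ioo a b,
      ρ x * deriv (deriv θk) x + 2 * deriv ρ x * deriv θk x = 0)
    (hodel : ∀ x ∈ Ioo a b,
      ρ x * deriv (deriv θl) x + 2 * deriv ρ x * deriv θl x = 0)
    (heq : ∀ x ∈ Ioo a b, (deriv θk x) ^ 2 = (deriv θl x) ^ 2) :
    (∃ c : ℝ, ∀ x ∈ Ioo a b, θk x - θl x = c) ∨
    (∃ c : ℝ, ∀ x ∈ Ioo a b, θk x + θl x = c) := by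
  set x0 := (a + b) / 2 with hx0def
  have hx0 : x0 ∈ Ioo a b := ⟨by linarith, by linarith⟩
  have hkc := const_of_derivzero (key_lemma hρ hθk hodek)
  have hlc := const_of_derivzero (key_lemma hρ hθl hodel)
  have hθkd : ∀ x ∈ Ioo a b, HasDerivAt θk (deriv θk x) x := fun x hx =>
    ((hθk.contDiffAt (isOpen_Ioo.mem_nhds hx)).differentiableAt (by norm_num)).hasDerivAt
  have hθld : ∀ x ∈ Ioo a b, HasDerivAt θl (deriv θl x) x := fun x hx =>
    ((hθl.contDiffAt (isOpen_Ioo.mem_nhds hx)).differentiableAt (by norm_num)).hasDerivAt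
  have hmul : (deriv θk x0 - deriv θl x0) * (deriv θk x0 + deriv θl x0) = 0 := by
    linear_combination heq x0 hx0
  rcases mul_eq_zero.mp hmul with h0 | h0
  · left
    refine ⟨θk x0 - θl x0, fun x hx => ?_⟩
    have hd : ∀ y ∈ Ioo a b, deriv θk y = deriv θl y := by
      intro y hy
      have h1 := hkc y hy x0 hx0
      have h2 := hlc y hy x0 hx0
      have hρy := hρ0 y hy
      have : ρ y ^ 2 * deriv θk y = ρ y ^ 2 * deriv θl y := by
        rw [h1, h2]; nlinarith [h0]
      have hρ2 : ρ y ^ 2 ≠ 0 := pow_ne_zero 2 hρy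
      exact mul_left_cancel₀ hρ2 this
    have hz : ∀ y ∈ Ioo a b, HasDerivAt (fun t => θk t - θl t) 0 y := by
      intro y hy
      have := (hθkd y hy).sub (hθld y hy)
      rwa [hd y hy, sub_self] at this
    exact const_of_derivzero hz x hx x0 hx0
  · right
    refine ⟨θk x0 + θl x0, fun x hx => ?_⟩
    have hd : ∀ y ∈ Ioo a b, deriv θk y = -deriv θl y := by
      intro y hy
      have h1 := hkc y hy x0 hx0
      have h2 := hlc y hy x0 hx0
      have hρy := hρ0 y hy
      have : ρ y ^ 2 * deriv θk y = ρ y ^ 2 * (-deriv θl y) := by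
        nlinarith [h0, h1, h2]
      have hρ2 : ρ y ^ 2 ≠ 0 := pow_ne_zero 2 hρy
      exact mul_left_cancel₀ hρ2 this
    have hz : ∀ y ∈ Ioo a b, HasDerivAt (fun t => θk t + θl t) 0 y := by
      intro y hy
      have := (hθkd y hy).add (hθld y hy)
      rw [hd y hy] at this
      rwa [neg_add_cancel] at this
    exact const_of_derivzero hz x hx x0 hx0
end

section
/- Let V : ℝ → ℝ be bounded from below, C ≠ 0, λ ∈ ℝ, and let ρ : ℝ → (0,∞) be a C² function satisfying −ρ'' + C²ρ⁻³ + Vρ = λρ on ℝ. Then ρ(x) does not tend to 0 as |x| → ∞. -/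
open Filter

lemma aux16 (f : ℝ → ℝ) (hf : Differentiable ℝ f) (a : ℝ)
    (h1 : ∀ x ∈ Set.Ici a, 1 ≤ deriv f x) :
    ∀ x ∈ Set.Ici a, f a + (x - a) ≤ f x := by
  have hmono : MonotoneOn (fun x => f x - x) (Set.Ici a) := by
    apply monotoneOn_of_deriv_nonneg (convex_Ici a)
    · exact (hf.sub differentiable_id).continuous.continuousOn
    · exact (hf.sub differentiable_id).differentiableOn
    · intro x hx
      rw [interior_Ici] at hx
      have hd : deriv (fun x => f x - x) x = deriv f x - 1 := by
        simp [deriv_fun_sub (hf x) differentiableAt_fun_id]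
      rw [hd]
      have := h1 x (Set.mem_Ici.mpr (le_of_lt (Set.mem_Ioi.mp hx)))
      linarith
  intro x hx
  have := hmono Set.self_mem_Ici hx hx
  simp only at this
  linarith

theorem stmt16 (V : ℝ → ℝ) (hV : ∃ mV : ℝ, ∀ x, mV ≤ V x)
    (C lam : ℝ) (hC : C ≠ 0) (ρ : ℝ → ℝ)
    (hρ : ContDiff ℝ 2 ρ) (hpos : ∀ x, 0 < ρ x)
    (hode : ∀ x, -deriv (deriv ρ) x + C ^ 2 * (ρ x ^ 3)⁻¹ + V x * ρ x = lam * ρ x) :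
    ¬ Tendsto ρ (cocompact ℝ) (nhds 0) := by
  intro hT
  obtain ⟨mV, hmV⟩ := hV
  have hC2 : 0 < C ^ 2 := by positivity
  set A := |mV - lam| with hA
  have hA0 : 0 ≤ A := abs_nonneg _
  set s := min 1 (C ^ 2 / (1 + A)) with hs
  have hs0 : 0 < s := lt_min one_pos (by positivity)
  have hs1 : s ≤ 1 := min_le_left _ _
  have hs2 : s ^ 3 ≤ C ^ 2 / (1 + A) := by
    have h1 : s ^ 3 ≤ s := by nlinarith [mul_nonneg hs0.le (sub_nonneg.mpr hs1), mul_nonneg (mul_nonneg hs0.le hs0.le) (sub_nonneg.mpr hs1)]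
    exact h1.trans (min_le_right _ _)
  -- differentiability facts
  have hρ' := (contDiff_succ_iff_deriv (n := 1)).mp (by exact_mod_cast hρ)
  have hdρ : Differentiable ℝ ρ := hρ'.1
  have hdd : Differentiable ℝ (deriv ρ) := hρ'.2.2.differentiable one_ne_zero
  -- eventually small at top
  have hTop : Tendsto ρ atTop (nhds 0) := by
    rw [cocompact_eq_atBot_atTop] at hT
    exact hT.mono_left le_sup_right
  have hev : ∀ᶠ x in atTop, ρ x < s := hTop.eventually (Filter.Tendsto.eventually_lt_const hs0 tendsto_id)
  obtain ⟨R, hR⟩ := eventually_atTop.mp hev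
  -- second derivative bound
  have hdd1 : ∀ x ∈ Set.Ici R, 1 ≤ deriv (deriv ρ) x := by
    intro x hx
    have hsm : ρ x < s := hR x hx
    have hpx := hpos x
    have heq : deriv (deriv ρ) x = C ^ 2 * (ρ x ^ 3)⁻¹ + (V x - lam) * ρ x := by
      linear_combination -hode x
    have h3 : (0:ℝ) < ρ x ^ 3 := by positivity
    have h4 : ρ x ^ 3 ≤ s ^ 3 := pow_le_pow_left₀ hpx.le hsm.le 3
    have h5 : (s ^ 3)⁻¹ ≤ (ρ x ^ 3)⁻¹ := by
      apply inv_anti₀ h3 h4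
    have h6 : 1 + A ≤ C ^ 2 * (s ^ 3)⁻¹ := by
      have hs3 : (0:ℝ) < s ^ 3 := by positivity
      have hpA : (0:ℝ) < 1 + A := by positivity
      have h := (le_div_iff₀ hpA).mp hs2
      rw [← div_eq_mul_inv, le_div_iff₀ hs3]
      nlinarith
    have h7 : C ^ 2 * (s ^ 3)⁻¹ ≤ C ^ 2 * (ρ x ^ 3)⁻¹ := by nlinarith
    have h8 : -(A) ≤ (V x - lam) * ρ x := by
      have hb : mV - lam ≤ V x - lam := by have := hmV x; linarith
      have h9 : -A ≤ mV - lam := neg_abs_le _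
      nlinarith [abs_nonneg (mV - lam)]
    linarith [heq ▸ le_refl (deriv (deriv ρ) x)]
  -- first derivative grows
  have hstep1 := aux16 (deriv ρ) hdd R hdd1
  set x0 := R + |deriv ρ R| + 1 with hx0
  have hx0R : R ≤ x0 := by linarith [abs_nonneg (deriv ρ R)]
  have hd1 : ∀ x ∈ Set.Ici x0, 1 ≤ deriv ρ x := by
    intro x hx
    have h1 := hstep1 x (le_trans hx0R hx)
    have h2 := neg_abs_le (deriv ρ R)
    have h3 : x0 ≤ x := hx
    linarith
  have hstep2 := aux16 ρ hdρ x0 hd1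
  have h1 := hstep2 (x0 + s) (Set.mem_Ici.mpr (by linarith))
  have h2 := hR (x0 + s) (by linarith)
  have h3 := hpos x0
  linarith
end

section
/- Let ρ : 𝕋 → (0,∞) be a positive C² function on the circle 𝕋 = ℝ/2πℤ, let C = 2π/∫₀^{2π} ρ(y)⁻² dy, let j be a positive integer, define θ(x) = Cj∫₀ˣ ρ(y)⁻² dy and V = ρ''/ρ − C²j²/ρ⁴. Then the function φ = ρe^{iθ} is well-defined on 𝕋 (i.e., θ(2π) − θ(0) = 2πj) and satisfies −φ'' + Vφ = 0 on 𝕋. -/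
theorem stmt17 (ρ : ℝ → ℝ) (hρ : ContDiff ℝ 2 ρ) (hpos : ∀ x, 0 < ρ x)
    (hper : ∀ x, ρ (x + 2 * Real.pi) = ρ x)
    (j : ℕ) (hj : 1 ≤ j)
    (C : ℝ) (hC : C = 2 * Real.pi / ∫ y in (0 : ℝ)..(2 * Real.pi), (ρ y ^ 2)⁻¹)
    (θ : ℝ → ℝ) (hθ : ∀ x, θ x = C * j * ∫ y in (0 : ℝ)..x, (ρ y ^ 2)⁻¹)
    (V : ℝ → ℝ) (hV : ∀ x, V x = deriv (deriv ρ) x / ρ x - C ^ 2 * j ^ 2 / ρ x ^ 4)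
    (φ : ℝ → ℂ) (hφ : ∀ x, φ x = (ρ x : ℂ) * Complex.exp (Complex.I * θ x)) :
    θ (2 * Real.pi) - θ 0 = 2 * Real.pi * j ∧
    (∀ x, φ (x + 2 * Real.pi) = φ x) ∧
    (∀ x : ℝ, -deriv (deriv φ) x + (V x : ℂ) * φ x = 0) := by
  have hρc : Continuous ρ := hρ.continuous
  have hρne : ∀ x, ρ x ≠ 0 := fun x => (hpos x).ne'
  set f : ℝ → ℝ := fun y => (ρ y ^ 2)⁻¹ with hf
  have hfc : Continuous f := (hρc.pow 2).inv₀ fun x => pow_ne_zero 2 ((hpos x).ne')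
  have hfpos : ∀ x, 0 < f x := fun x => inv_pos.mpr (pow_pos (hpos x) 2)
  have hI : 0 < ∫ y in (0 : ℝ)..(2 * Real.pi), f y :=
    intervalIntegral.intervalIntegral_pos_of_pos (hfc.intervalIntegrable _ _) hfpos
      (by positivity)
  have hθ0 : θ 0 = 0 := by simp [hθ 0]
  have hCI : C * (∫ y in (0 : ℝ)..(2 * Real.pi), f y) = 2 * Real.pi := by
    rw [hC]; field_simp
  have part1 : θ (2 * Real.pi) - θ 0 = 2 * Real.pi * j := by
    rw [hθ0, hθ (2 * Real.pi), sub_zero]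
    calc C * j * ∫ y in (0:ℝ)..(2*Real.pi), f y
        = (C * (∫ y in (0:ℝ)..(2*Real.pi), f y)) * j := by ring
      _ = 2 * Real.pi * j := by rw [hCI]
  -- periodicity of θ
  have hθper : ∀ x, θ (x + 2 * Real.pi) = θ x + 2 * Real.pi * j := by
    intro x
    have hsplit : (∫ y in (0:ℝ)..(2*Real.pi), f y) + ∫ y in (2*Real.pi)..(x + 2*Real.pi), f y
        = ∫ y in (0:ℝ)..(x + 2*Real.pi), f y :=
      intervalIntegral.integral_add_adjacent_intervals (hfc.intervalIntegrable _ _)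
        (hfc.intervalIntegrable _ _)
    have hshift : (∫ y in (2*Real.pi)..(x + 2*Real.pi), f y) = ∫ y in (0:ℝ)..x, f y := by
      have := intervalIntegral.integral_comp_add_right (a := (0:ℝ)) (b := x)
        (f := f) (2 * Real.pi)
      simp only [zero_add] at this
      rw [← this]
      congr 1
      funext y
      simp only [hf, hper y]
    rw [hθ (x + 2*Real.pi), hθ x, ← hsplit, hshift]
    have : C * ↑j * ((∫ y in (0:ℝ)..(2*Real.pi), f y) + ∫ y in (0:ℝ)..x, f y)
        = C * ↑j * (∫ y in (0:ℝ)..x, f y) + (C * (∫ y in (0:ℝ)..(2*Real.pi), f y)) * j := by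
      ring
    rw [this, hCI]
  have part2 : ∀ x, φ (x + 2 * Real.pi) = φ x := by
    intro x
    rw [hφ, hφ, hper, hθper]
    have : Complex.I * ((θ x + 2 * Real.pi * j : ℝ) : ℂ)
        = Complex.I * (θ x : ℂ) + (j : ℤ) * (2 * Real.pi * Complex.I) := by
      push_cast; ring
    rw [this, Complex.exp_add, Complex.exp_int_mul_two_pi_mul_I, mul_one]
  -- derivatives
  have hρdiff : Differentiable ℝ ρ := hρ.differentiable (by norm_num)
  have hρ1 : ContDiff ℝ 1 (deriv ρ) :=
    (contDiff_succ_iff_deriv.mp (show ContDiff ℝ (1 + 1) ρ by exact_mod_cast hρ)).2.2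
  have hρ'diff : Differentiable ℝ (deriv ρ) := hρ1.differentiable (by norm_num)
  have hθd : ∀ x, HasDerivAt θ (C * j * f x) x := by
    intro x
    have h := ((hfc.integral_hasStrictDerivAt 0 x).hasDerivAt).const_mul (C * (j:ℝ))
    have hθeq : θ = fun u => C * (j:ℝ) * ∫ y in (0:ℝ)..u, f y := funext hθ
    rw [hθeq]
    exact h
  have hexp : ∀ x, HasDerivAt (fun x : ℝ => Complex.exp (Complex.I * (θ x : ℂ)))
      (Complex.exp (Complex.I * (θ x : ℂ)) * (Complex.I * ((C * j * f x : ℝ) : ℂ))) x := by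
    intro x
    exact (((hθd x).ofReal_comp).const_mul Complex.I).cexp
  have hφd : ∀ x, HasDerivAt φ
      ((((deriv ρ x : ℝ) : ℂ) + Complex.I * C * j / ((ρ x : ℂ)))
        * Complex.exp (Complex.I * (θ x : ℂ))) x := by
    intro x
    have hr : HasDerivAt (fun x : ℝ => ((ρ x : ℝ) : ℂ)) (((deriv ρ x : ℝ) : ℂ)) x :=
      ((hρdiff x).hasDerivAt).ofReal_comp
    have h := hr.mul (hexp x)
    have hφeq : φ = fun x => ((ρ x : ℂ)) * Complex.exp (Complex.I * (θ x : ℂ)) := funext hφ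
    rw [hφeq]
    refine h.congr_deriv ?_
    have h1 : ((ρ x : ℂ)) ≠ 0 := by exact_mod_cast hρne x
    push_cast [hf]
    field_simp
  have hderiv1 : deriv φ = fun x => (((deriv ρ x : ℝ) : ℂ) + Complex.I * C * j / ((ρ x : ℂ)))
      * Complex.exp (Complex.I * (θ x : ℂ)) := funext fun x => (hφd x).deriv
  have hd2 : ∀ x, deriv (deriv φ) x
      = (((deriv (deriv ρ) x : ℝ) : ℂ) - (C * j : ℂ) ^ 2 * (((ρ x : ℂ)) ^ 3)⁻¹)
        * Complex.exp (Complex.I * (θ x : ℂ)) := by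
    intro x
    have h1 : ((ρ x : ℂ)) ≠ 0 := by exact_mod_cast hρne x
    have hr : HasDerivAt (fun x : ℝ => ((ρ x : ℝ) : ℂ)) (((deriv ρ x : ℝ) : ℂ)) x :=
      ((hρdiff x).hasDerivAt).ofReal_comp
    have ha : HasDerivAt (fun x : ℝ => ((deriv ρ x : ℝ) : ℂ)) (((deriv (deriv ρ) x : ℝ) : ℂ)) x :=
      ((hρ'diff x).hasDerivAt).ofReal_comp
    have hb : HasDerivAt (fun x : ℝ => Complex.I * C * j / ((ρ x : ℂ)))
        ((0 * (ρ x : ℂ) - Complex.I * C * j * ((deriv ρ x : ℝ) : ℂ)) / ((ρ x : ℂ)) ^ 2) x :=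
      (hasDerivAt_const x (Complex.I * C * (j : ℂ))).div hr h1
    have hsum := ha.add hb
    have h := hsum.mul (hexp x)
    rw [hderiv1]
    rw [show deriv (fun x : ℝ => (((deriv ρ x : ℝ) : ℂ) + Complex.I * C * j / ((ρ x : ℂ)))
        * Complex.exp (Complex.I * (θ x : ℂ))) x = _ from h.deriv]
    have hI2 : Complex.I ^ 2 = -1 := Complex.I_sq
    push_cast [hf]
    simp only [Pi.add_apply]
    field_simp
    ring_nf
    rw [hI2]
    ring
  refine ⟨part1, part2, ?_⟩
  intro x
  rw [hd2 x, hV x, hφ x]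
  have h1 : ((ρ x : ℂ)) ≠ 0 := by exact_mod_cast hρne x
  push_cast
  field_simp
  ring
end
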